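/- The symmetrized empirical distribution map ιₙ : Xₙ → PX, sending the multiset {x₁,…,xₙ} to the uniform measure (1/n)(δ(x₁)+…+δ(xₙ)), is an isometric embedding, where Xₙ carries the metric d({xᵢ},{yᵢ}) = min over permutations σ of (1/n) Σᵢ d(xᵢ, y_{σ(i)}) and PX carries the 1-Wasserstein distance. -/

import Mathlib

open MeasureTheory
open scoped ENNReal

/-- The 1-Wasserstein distance, defined as the infimum over all couplings of the
expected distance. -/
noncomputable def W1 {X : Type*} [MeasurableSpace X] [PseudoEMetricSpace X]
    (p q : Measure X) : ℝ≥0∞ :=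
  ⨅ r ∈ {r : Measure (X × X) | r.map Prod.fst = p ∧ r.map Prod.snd = q},
    ∫⁻ z, edist z.1 z.2 ∂r

section Aux
open Finset

lemma nsmul_inv_cancel' (d : ℕ) (hd : d ≠ 0) (a : ℝ≥0∞) :
    d • ((d : ℝ≥0∞)⁻¹ * a) = a := by
  rw [nsmul_eq_mul, ← mul_assoc,
    ENNReal.mul_inv_cancel (by exact_mod_cast hd) (ENNReal.natCast_ne_top d), one_mul]

lemma emp_apply {X : Type*} [DecidableEq X] [MetricSpace X] [MeasurableSpace X] [BorelSpace X]
    {n : ℕ} (x : Fin n → X) (s : X) :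
    ((n : ℝ≥0∞)⁻¹ • ∑ i, Measure.dirac (x i)) {s}
      = ((univ.filter fun i => x i = s).card : ℝ≥0∞) * (n : ℝ≥0∞)⁻¹ := by
  rw [Measure.smul_apply, Measure.finset_sum_apply]
  simp only [Measure.dirac_apply, Set.indicator_apply, Set.mem_singleton_iff, Pi.one_apply,
    smul_eq_mul]
  rw [Finset.sum_boole, mul_comm]

lemma emp_compl {X : Type*} [DecidableEq X] [MetricSpace X] [MeasurableSpace X] [BorelSpace X]
    {n : ℕ} (x : Fin n → X) :
    ((n : ℝ≥0∞)⁻¹ • ∑ i, Measure.dirac (x i)) ((↑(univ.image x) : Set X)ᶜ) = 0 := by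
  rw [Measure.smul_apply, Measure.finset_sum_apply]
  have : ∀ i : Fin n, Measure.dirac (x i) ((↑(univ.image x) : Set X)ᶜ) = 0 := by
    intro i
    rw [Measure.dirac_apply]
    simp [Set.indicator_apply]
  simp [this]

lemma emp_univ {X : Type*} [MetricSpace X] [MeasurableSpace X] [BorelSpace X]
    {n : ℕ} (hn : 0 < n) (x : Fin n → X) :
    ((n : ℝ≥0∞)⁻¹ • ∑ i, Measure.dirac (x i)) Set.univ = 1 := by
  simp [Measure.smul_apply, Measure.finset_sum_apply]
  rw [ENNReal.inv_mul_cancel (by exact_mod_cast hn.ne') (ENNReal.natCast_ne_top n)]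

set_option maxHeartbeats 1000000 in
lemma lower_aux {X : Type*} [DecidableEq X] [MetricSpace X] [MeasurableSpace X] [BorelSpace X]
    {n : ℕ} (hn : 0 < n) (x y : Fin n → X) (r : Measure (X × X))
    (hr1 : r.map Prod.fst = (n : ℝ≥0∞)⁻¹ • ∑ i, Measure.dirac (x i))
    (hr2 : r.map Prod.snd = (n : ℝ≥0∞)⁻¹ • ∑ i, Measure.dirac (y i)) :
    ⨅ σ : Equiv.Perm (Fin n), (n : ℝ≥0∞)⁻¹ * ∑ i, edist (x i) (y (σ i)) ≤
      ∫⁻ z, edist z.1 z.2 ∂r := by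
  classical
  have hn0 : (n : ℝ≥0∞) ≠ 0 := by exact_mod_cast hn.ne'
  have hnT : (n : ℝ≥0∞) ≠ ⊤ := ENNReal.natCast_ne_top n
  set Sf : Finset X := univ.image x with hSf
  set Tf : Finset X := univ.image y with hTf
  set c : X → ℕ := fun s => (univ.filter fun i => x i = s).card with hc
  set d : X → ℕ := fun t => (univ.filter fun i => y i = t).card with hd
  have hcx : ∀ i, c (x i) ≠ 0 := fun i =>
    (Finset.card_pos.mpr ⟨i, by simp⟩).ne'
  have hdy : ∀ i, d (y i) ≠ 0 := fun i =>
    (Finset.card_pos.mpr ⟨i, by simp⟩).ne'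
  have hdt : ∀ t ∈ Tf, d t ≠ 0 := by
    intro t ht
    obtain ⟨j, -, rfl⟩ := Finset.mem_image.mp ht
    exact hdy j
  have hcs : ∀ s ∈ Sf, c s ≠ 0 := by
    intro s hs
    obtain ⟨i, -, rfl⟩ := Finset.mem_image.mp hs
    exact hcx i
  -- null sets
  have hSm : MeasurableSet (↑Sf : Set X) := Sf.finite_toSet.measurableSet
  have hTm : MeasurableSet (↑Tf : Set X) := Tf.finite_toSet.measurableSet
  have hmapfst : ∀ A : Set X, MeasurableSet A →
      r (Prod.fst ⁻¹' A) = ((n : ℝ≥0∞)⁻¹ • ∑ i, Measure.dirac (x i)) A := by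
    intro A hA
    rw [← hr1, Measure.map_apply measurable_fst hA]
  have hmapsnd : ∀ A : Set X, MeasurableSet A →
      r (Prod.snd ⁻¹' A) = ((n : ℝ≥0∞)⁻¹ • ∑ i, Measure.dirac (y i)) A := by
    intro A hA
    rw [← hr2, Measure.map_apply measurable_snd hA]
  have null1 : r (Prod.fst ⁻¹' (↑Sf : Set X)ᶜ) = 0 := by
    rw [hmapfst _ hSm.compl]; exact emp_compl x
  have null2 : r (Prod.snd ⁻¹' (↑Tf : Set X)ᶜ) = 0 := by
    rw [hmapsnd _ hTm.compl]; exact emp_compl y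
  have hnull : r ((↑(Sf ×ˢ Tf) : Set (X × X))ᶜ) = 0 := by
    refine measure_mono_null ?_ (measure_union_null null1 null2)
    intro z hz
    simp only [Set.mem_compl_iff, Finset.coe_product, Set.mem_prod, Finset.mem_coe,
      not_and_or] at hz
    simpa using hz
  have hr_univ : r Set.univ = 1 := by
    have := hmapfst Set.univ MeasurableSet.univ
    rwa [Set.preimage_univ, emp_univ hn x] at this
  have hrfin : ∀ A : Set (X × X), r A ≠ ⊤ := fun A =>
    ((measure_mono (Set.subset_univ A)).trans_lt (by rw [hr_univ]; exact ENNReal.one_lt_top)).ne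
  have Ieq : ∫⁻ z, edist z.1 z.2 ∂r
      = ∑ z ∈ Sf ×ˢ Tf, edist z.1 z.2 * r {z} := by
    conv_lhs => rw [← Measure.restrict_eq_self_of_ae_mem
      (s := (↑(Sf ×ˢ Tf) : Set (X × X))) (μ := r) (ae_iff.mpr hnull)]
    exact lintegral_finset (Sf ×ˢ Tf) _
  -- marginal point masses
  have hmeq : ∀ (A B : Set (X × X)), B ⊆ A → A \ B ⊆ (↑(Sf ×ˢ Tf) : Set (X × X))ᶜ →
      r A = r B := by
    intro A B hBA hdiff
    refine le_antisymm ?_ (measure_mono hBA)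
    calc r A ≤ r (B ∪ (A \ B)) := measure_mono (by intro z hz; by_cases h : z ∈ B <;> simp [h, hz])
      _ ≤ r B + r (A \ B) := measure_union_le _ _
      _ = r B := by rw [measure_mono_null hdiff hnull, add_zero]
  have hrowpt : ∀ s : X, ∑ t ∈ Tf, r {(s, t)} = (c s : ℝ≥0∞) * (n : ℝ≥0∞)⁻¹ := by
    intro s
    have h1 : ∑ t ∈ Tf, r {(s, t)} = r (⋃ t ∈ Tf, {((s, t) : X × X)}) := by
      rw [measure_biUnion_finset ?hd fun t _ => measurableSet_singleton _]
      case hd =>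
        intro a ha b hb hab
        simp only [Function.onFun, Set.disjoint_singleton_left, Set.mem_singleton_iff]
        exact fun h => hab (by simpa using congrArg Prod.snd h)
    have h2 : (⋃ t ∈ Tf, {((s, t) : X × X)}) = {s} ×ˢ (↑Tf : Set X) := by
      ext z
      simp only [Set.mem_iUnion, Set.mem_singleton_iff, Set.mem_prod, Finset.mem_coe,
        Prod.ext_iff]
      aesop
    have h3 : r ({s} ×ˢ (↑Tf : Set X)) = r (Prod.fst ⁻¹' {s}) := by
      have hpre : Prod.fst ⁻¹' ({s} : Set X) = ({s} : Set X) ×ˢ (Set.univ : Set X) := by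
        ext ⟨a, b⟩; simp [Set.mem_prod, Prod.ext_iff, eq_comm]
      rw [hpre]
      refine (hmeq _ _ ?_ ?_).symm
      · rintro z ⟨hz1, hz2⟩
        exact ⟨hz1, trivial⟩
      · rintro z ⟨⟨hz1, -⟩, hz2⟩
        simp only [Finset.coe_product, Set.mem_compl_iff, Set.mem_prod, Finset.mem_coe, not_and]
        intro _ hT
        exact hz2 ⟨hz1, hT⟩
    rw [h1, h2, h3, hmapfst _ (measurableSet_singleton s), emp_apply]
  have hcolpt : ∀ t : X, ∑ s ∈ Sf, r {(s, t)} = (d t : ℝ≥0∞) * (n : ℝ≥0∞)⁻¹ := by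
    intro t
    have h1 : ∑ s ∈ Sf, r {(s, t)} = r (⋃ s ∈ Sf, {((s, t) : X × X)}) := by
      rw [measure_biUnion_finset ?hd fun s _ => measurableSet_singleton _]
      case hd =>
        intro a ha b hb hab
        simp only [Function.onFun, Set.disjoint_singleton_left, Set.mem_singleton_iff]
        exact fun h => hab (by simpa using congrArg Prod.fst h)
    have h2 : (⋃ s ∈ Sf, {((s, t) : X × X)}) = (↑Sf : Set X) ×ˢ {t} := by
      ext z
      simp only [Set.mem_iUnion, Set.mem_singleton_iff, Set.mem_prod, Finset.mem_coe,
        Prod.ext_iff]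
      aesop
    have h3 : r ((↑Sf : Set X) ×ˢ {t}) = r (Prod.snd ⁻¹' {t}) := by
      have hpre : Prod.snd ⁻¹' ({t} : Set X) = (Set.univ : Set X) ×ˢ ({t} : Set X) := by
        ext ⟨a, b⟩; simp [Set.mem_prod, Prod.ext_iff, eq_comm]
      rw [hpre]
      refine (hmeq _ _ ?_ ?_).symm
      · rintro z ⟨hz1, hz2⟩
        exact ⟨trivial, hz2⟩
      · rintro z ⟨⟨-, hz2⟩, hz1⟩
        simp only [Finset.coe_product, Set.mem_compl_iff, Set.mem_prod, Finset.mem_coe, not_and]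
        intro hS hT
        exact hz1 ⟨hS, hz2⟩
    rw [h1, h2, h3, hmapsnd _ (measurableSet_singleton t), emp_apply]
  -- the coupling matrix
  set M : Fin n → Fin n → ℝ≥0∞ := fun i j =>
    (c (x i) : ℝ≥0∞)⁻¹ * ((d (y j) : ℝ≥0∞)⁻¹ * r {(x i, y j)}) with hM
  have hrow : ∀ i, ∑ j, M i j = (n : ℝ≥0∞)⁻¹ := by
    intro i
    calc ∑ j, M i j
        = ∑ j, (fun t => (d t : ℝ≥0∞)⁻¹ * ((c (x i) : ℝ≥0∞)⁻¹ * r {(x i, t)})) (y j) := by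
          refine Finset.sum_congr rfl fun j _ => ?_
          simp only [hM]; ring
      _ = ∑ t ∈ univ.image y, (univ.filter fun a => y a = t).card •
            ((d t : ℝ≥0∞)⁻¹ * ((c (x i) : ℝ≥0∞)⁻¹ * r {(x i, t)})) :=
            Finset.sum_comp (fun t => (d t : ℝ≥0∞)⁻¹ * ((c (x i) : ℝ≥0∞)⁻¹ * r {(x i, t)})) y
      _ = ∑ t ∈ Tf, (c (x i) : ℝ≥0∞)⁻¹ * r {(x i, t)} := by
          refine Finset.sum_congr rfl fun t ht => ?_
          exact nsmul_inv_cancel' (d t) (hdt t ht) _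
      _ = (c (x i) : ℝ≥0∞)⁻¹ * ∑ t ∈ Tf, r {(x i, t)} := by rw [Finset.mul_sum]
      _ = (n : ℝ≥0∞)⁻¹ := by
          rw [hrowpt, ← mul_assoc, ENNReal.inv_mul_cancel (by exact_mod_cast hcx i)
            (ENNReal.natCast_ne_top _), one_mul]
  have hcol : ∀ j, ∑ i, M i j = (n : ℝ≥0∞)⁻¹ := by
    intro j
    calc ∑ i, M i j
        = ∑ i, (fun s => (c s : ℝ≥0∞)⁻¹ * ((d (y j) : ℝ≥0∞)⁻¹ * r {(s, y j)})) (x i) := rfl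
      _ = ∑ s ∈ univ.image x, (univ.filter fun a => x a = s).card •
            ((c s : ℝ≥0∞)⁻¹ * ((d (y j) : ℝ≥0∞)⁻¹ * r {(s, y j)})) :=
            Finset.sum_comp (fun s => (c s : ℝ≥0∞)⁻¹ * ((d (y j) : ℝ≥0∞)⁻¹ * r {(s, y j)})) x
      _ = ∑ s ∈ Sf, (d (y j) : ℝ≥0∞)⁻¹ * r {(s, y j)} := by
          refine Finset.sum_congr rfl fun s hs => ?_
          exact nsmul_inv_cancel' (c s) (hcs s hs) _
      _ = (d (y j) : ℝ≥0∞)⁻¹ * ∑ s ∈ Sf, r {(s, y j)} := by rw [Finset.mul_sum]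
      _ = (n : ℝ≥0∞)⁻¹ := by
          rw [hcolpt, ← mul_assoc, ENNReal.inv_mul_cancel (by exact_mod_cast hdy j)
            (ENNReal.natCast_ne_top _), one_mul]
  have hcost : ∑ i, ∑ j, M i j * edist (x i) (y j)
      = ∑ z ∈ Sf ×ˢ Tf, edist z.1 z.2 * r {z} := by
    have inner : ∀ i, ∑ j, M i j * edist (x i) (y j)
        = (fun s => (c s : ℝ≥0∞)⁻¹ * ∑ t ∈ Tf, r {(s, t)} * edist s t) (x i) := by
      intro i
      calc ∑ j, M i j * edist (x i) (y j)
          = ∑ j, (fun t => (d t : ℝ≥0∞)⁻¹ *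
              ((c (x i) : ℝ≥0∞)⁻¹ * (r {(x i, t)} * edist (x i) t))) (y j) := by
            refine Finset.sum_congr rfl fun j _ => ?_
            simp only [hM]; ring
        _ = ∑ t ∈ univ.image y, (univ.filter fun a => y a = t).card •
              ((d t : ℝ≥0∞)⁻¹ * ((c (x i) : ℝ≥0∞)⁻¹ * (r {(x i, t)} * edist (x i) t))) :=
            Finset.sum_comp
              (fun t => (d t : ℝ≥0∞)⁻¹ * ((c (x i) : ℝ≥0∞)⁻¹ * (r {(x i, t)} * edist (x i) t))) y
        _ = ∑ t ∈ Tf, (c (x i) : ℝ≥0∞)⁻¹ * (r {(x i, t)} * edist (x i) t) := by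
            refine Finset.sum_congr rfl fun t ht => ?_
            exact nsmul_inv_cancel' (d t) (hdt t ht) _
        _ = (c (x i) : ℝ≥0∞)⁻¹ * ∑ t ∈ Tf, r {(x i, t)} * edist (x i) t := by
            rw [Finset.mul_sum]
    calc ∑ i, ∑ j, M i j * edist (x i) (y j)
        = ∑ i, (fun s => (c s : ℝ≥0∞)⁻¹ * ∑ t ∈ Tf, r {(s, t)} * edist s t) (x i) :=
          Finset.sum_congr rfl fun i _ => inner i
      _ = ∑ s ∈ univ.image x, (univ.filter fun a => x a = s).card •
            ((c s : ℝ≥0∞)⁻¹ * ∑ t ∈ Tf, r {(s, t)} * edist s t) :=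
          Finset.sum_comp (fun s => (c s : ℝ≥0∞)⁻¹ * ∑ t ∈ Tf, r {(s, t)} * edist s t) x
      _ = ∑ s ∈ Sf, ∑ t ∈ Tf, r {(s, t)} * edist s t := by
          refine Finset.sum_congr rfl fun s hs => ?_
          exact nsmul_inv_cancel' (c s) (hcs s hs) _
      _ = ∑ z ∈ Sf ×ˢ Tf, edist z.1 z.2 * r {z} := by
          rw [Finset.sum_product]
          exact Finset.sum_congr rfl fun s _ => Finset.sum_congr rfl fun t _ => mul_comm _ _
  -- finiteness of M
  have hMfin : ∀ i j, M i j ≠ ⊤ := by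
    intro i j
    refine ((Finset.single_le_sum (f := M i) (fun _ _ => zero_le) (mem_univ j)).trans_lt
      ?_).ne
    rw [hrow i]
    exact ENNReal.inv_lt_top.mpr (by exact_mod_cast hn)
  -- the real doubly stochastic matrix
  set A : Matrix (Fin n) (Fin n) ℝ := fun i j => ((n : ℝ≥0∞) * M i j).toReal with hA
  have hnMfin : ∀ i j, (n : ℝ≥0∞) * M i j ≠ ⊤ := fun i j => ENNReal.mul_ne_top hnT (hMfin i j)
  have hAmem : A ∈ doublyStochastic ℝ (Fin n) := by
    rw [mem_doublyStochastic_iff_sum]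
    refine ⟨fun i j => ENNReal.toReal_nonneg, fun i => ?_, fun j => ?_⟩
    · rw [← ENNReal.toReal_sum (fun j _ => hnMfin i j), ← Finset.mul_sum, hrow i,
        ENNReal.mul_inv_cancel hn0 hnT, ENNReal.toReal_one]
    · rw [← ENNReal.toReal_sum (fun i _ => hnMfin i j), ← Finset.mul_sum, hcol j,
        ENNReal.mul_inv_cancel hn0 hnT, ENNReal.toReal_one]
  -- Birkhoff
  obtain ⟨w, hw0, hw1, hwA⟩ := exists_eq_sum_perm_of_mem_doublyStochastic hAmem
  have hPM : ∀ (σ : Equiv.Perm (Fin n)) i j,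
      (σ.permMatrix ℝ) i j = if σ i = j then 1 else 0 := by
    intro σ i j
    simp [Equiv.Perm.permMatrix, PEquiv.toMatrix_apply, Equiv.toPEquiv_apply, Option.mem_def]
  have hAij : ∀ i j, A i j = ∑ σ : Equiv.Perm (Fin n), w σ * (if σ i = j then 1 else 0) := by
    intro i j
    rw [← hwA]
    simp [Matrix.sum_apply, hPM, Equiv.toPEquiv_apply]
  -- optimal permutation
  obtain ⟨σ₀, hσ₀⟩ := Finite.exists_min
    (fun σ : Equiv.Perm (Fin n) => ∑ i, dist (x i) (y (σ i)))
  have hcostR : ∑ i, ∑ j, A i j * dist (x i) (y j)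
      = ∑ σ : Equiv.Perm (Fin n), w σ * ∑ i, dist (x i) (y (σ i)) := by
    have step1 : ∀ i, ∑ j, A i j * dist (x i) (y j)
        = ∑ σ : Equiv.Perm (Fin n), w σ * dist (x i) (y (σ i)) := by
      intro i
      calc ∑ j, A i j * dist (x i) (y j)
          = ∑ j, ∑ σ : Equiv.Perm (Fin n),
              (if σ i = j then w σ * dist (x i) (y j) else 0) := by
            refine Finset.sum_congr rfl fun j _ => ?_
            rw [hAij, Finset.sum_mul]
            refine Finset.sum_congr rfl fun σ _ => ?_
            by_cases h : σ i = j <;> simp [h]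
        _ = ∑ σ : Equiv.Perm (Fin n), ∑ j,
              (if σ i = j then w σ * dist (x i) (y j) else 0) := Finset.sum_comm
        _ = ∑ σ : Equiv.Perm (Fin n), w σ * dist (x i) (y (σ i)) := by
            refine Finset.sum_congr rfl fun σ _ => ?_
            rw [Finset.sum_ite_eq]
            simp
    rw [Finset.sum_congr rfl fun i _ => step1 i, Finset.sum_comm]
    exact Finset.sum_congr rfl fun σ _ => (Finset.mul_sum _ _ _).symm
  have hgeR : ∑ i, dist (x i) (y (σ₀ i)) ≤ ∑ i, ∑ j, A i j * dist (x i) (y j) := by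
    rw [hcostR]
    calc ∑ i, dist (x i) (y (σ₀ i))
        = ∑ σ : Equiv.Perm (Fin n), w σ * ∑ i, dist (x i) (y (σ₀ i)) := by
          rw [← Finset.sum_mul, hw1, one_mul]
      _ ≤ ∑ σ : Equiv.Perm (Fin n), w σ * ∑ i, dist (x i) (y (σ i)) :=
          Finset.sum_le_sum fun σ _ => mul_le_mul_of_nonneg_left (hσ₀ σ) (hw0 σ)
  -- conclude
  rcases eq_or_ne (∫⁻ z, edist z.1 z.2 ∂r) ⊤ with hI | hI
  · rw [hI]; exact le_top
  have hIeqM : ∑ i, ∑ j, M i j * edist (x i) (y j) = ∫⁻ z, edist z.1 z.2 ∂r := by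
    rw [hcost, Ieq]
  have hE0fin : (∑ i, edist (x i) (y (σ₀ i))) ≠ ⊤ :=
    (ENNReal.sum_lt_top.mpr fun i _ => (edist_lt_top _ _)).ne
  have hAd : ∑ i, ∑ j, A i j * dist (x i) (y j)
      = ((n : ℝ≥0∞) * ∫⁻ z, edist z.1 z.2 ∂r).toReal := by
    have hterm : ∀ i j, A i j * dist (x i) (y j)
        = (((n : ℝ≥0∞) * M i j) * edist (x i) (y j)).toReal := by
      intro i j
      rw [ENNReal.toReal_mul, hA, dist_edist]
    calc ∑ i, ∑ j, A i j * dist (x i) (y j)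
        = ∑ i, ∑ j, (((n : ℝ≥0∞) * M i j) * edist (x i) (y j)).toReal := by
          exact Finset.sum_congr rfl fun i _ => Finset.sum_congr rfl fun j _ => hterm i j
      _ = (∑ i, ∑ j, ((n : ℝ≥0∞) * M i j) * edist (x i) (y j)).toReal := by
          rw [ENNReal.toReal_sum]
          · exact Finset.sum_congr rfl fun i _ => (ENNReal.toReal_sum
              (fun j _ => ENNReal.mul_ne_top (hnMfin i j) (edist_ne_top _ _))).symm
          · intro i _
            exact (ENNReal.sum_lt_top.mpr fun j _ =>
              (ENNReal.mul_ne_top (hnMfin i j) (edist_ne_top _ _)).lt_top).ne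
      _ = ((n : ℝ≥0∞) * ∫⁻ z, edist z.1 z.2 ∂r).toReal := by
          congr 1
          rw [← hIeqM, Finset.mul_sum]
          refine Finset.sum_congr rfl fun i _ => ?_
          rw [Finset.mul_sum]
          exact Finset.sum_congr rfl fun j _ => by ring
  have hE0R : (∑ i, edist (x i) (y (σ₀ i))).toReal = ∑ i, dist (x i) (y (σ₀ i)) := by
    rw [ENNReal.toReal_sum (fun i _ => edist_ne_top _ _)]
    exact Finset.sum_congr rfl fun i _ => (dist_edist _ _).symm
  have hkey : ∑ i, edist (x i) (y (σ₀ i)) ≤ (n : ℝ≥0∞) * ∫⁻ z, edist z.1 z.2 ∂r := by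
    rw [← ENNReal.toReal_le_toReal hE0fin (ENNReal.mul_ne_top hnT hI), hE0R, ← hAd]
    exact hgeR
  refine (iInf_le _ σ₀).trans ?_
  calc (n : ℝ≥0∞)⁻¹ * ∑ i, edist (x i) (y (σ₀ i))
      ≤ (n : ℝ≥0∞)⁻¹ * ((n : ℝ≥0∞) * ∫⁻ z, edist z.1 z.2 ∂r) := by
        exact mul_le_mul_right hkey _
    _ = ∫⁻ z, edist z.1 z.2 ∂r := by
        rw [← mul_assoc, ENNReal.inv_mul_cancel hn0 hnT, one_mul]

end Aux

/-- The symmetrized empirical distribution map is an isometric embedding: the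
1-Wasserstein distance between the two uniform measures on `n` points equals the
normalized optimal-matching distance between the multisets. -/
theorem stmt13 {X : Type*} [MetricSpace X] [MeasurableSpace X] [BorelSpace X]
    (n : ℕ) (hn : 0 < n) (x y : Fin n → X) :
    W1 ((n : ℝ≥0∞)⁻¹ • ∑ i, Measure.dirac (x i)) ((n : ℝ≥0∞)⁻¹ • ∑ i, Measure.dirac (y i)) =
      ⨅ σ : Equiv.Perm (Fin n), (n : ℝ≥0∞)⁻¹ * ∑ i, edist (x i) (y (σ i)) := by
  classical
  rw [W1]
  apply le_antisymm
  · refine le_iInf fun σ => ?_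
    refine iInf₂_le_of_le ((n : ℝ≥0∞)⁻¹ • ∑ i, Measure.dirac ((x i, y (σ i)) : X × X)) ?_ ?_
    · constructor
      · rw [Measure.map_smul]
        congr 1
        rw [← MeasureTheory.Measure.mapₗ_apply_of_measurable measurable_fst, map_sum]
        simp [MeasureTheory.Measure.mapₗ_apply_of_measurable measurable_fst,
          Measure.map_dirac' measurable_fst]
      · rw [Measure.map_smul]
        congr 1
        rw [← MeasureTheory.Measure.mapₗ_apply_of_measurable measurable_snd, map_sum]
        simp only [MeasureTheory.Measure.mapₗ_apply_of_measurable measurable_snd,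
          Measure.map_dirac' measurable_snd]
        exact Equiv.sum_comp σ (fun i => Measure.dirac (y i))
    · rw [lintegral_smul_measure, lintegral_finset_sum_measure]
      simp [lintegral_dirac]
  · exact le_iInf₂ fun r hr => lower_aux hn x y r hr.1 hr.2
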